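/- Let G = (L, R, E) be a bipartite graph with nonnegative, pairwise-distinct edge weights, let p ∈ [0,1], and let each vertex of L be colored red independently with probability p (blue otherwise), with L' the set of red vertices. Then the expected weight of the greedy matching on the subgraph induced by L' ∪ R equals p · Σ_{i=1}^m w(e_i) · Pr[v_{e_i} is active], where the sum ranges over all edges and 'active' refers to the inductive activity definition on the directed line graph determined by the random coloring. -/

import Mathlib

open Finset

open scoped Classical

/-- Greedy matching with fuel: repeatedly pick the maximum-weight remaining edge and
discard all edges conflicting with it. -/
noncomputable def greedyAux {α : Type*} [DecidableEq α] (w : α → ℝ)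
    (conflict : α → α → Prop) : ℕ → Finset α → Finset α
  | 0, _ => ∅
  | n + 1, F =>
    if h : F.Nonempty then
      let e := (F.exists_max_image w h).choose
      insert e (greedyAux w conflict n (F.filter fun f => ¬ conflict e f))
    else ∅

/-- The greedy matching of an edge set `F`: process edges in decreasing order of weight,
adding an edge whenever it conflicts with no previously added edge. -/
noncomputable def greedy {α : Type*} [DecidableEq α] (w : α → ℝ)
    (conflict : α → α → Prop) (F : Finset α) : Finset α :=
  greedyAux w conflict F.card F

/-- Two edges of a bipartite graph conflict iff they share an endpoint. -/
def bconf {L R : Type*} (e f : L × R) : Prop := e.1 = f.1 ∨ e.2 = f.2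

/-- The edge set of the subgraph `G[U ∪ R]` induced by a set `U` of left vertices
(together with the whole right side). -/
def subL {L R : Type*} [DecidableEq L] (E : Finset (L × R)) (U : Finset L) :
    Finset (L × R) :=
  E.filter fun e => e.1 ∈ U

/-- Expectation of `f` over a random subset of `s` containing each element
independently with probability `p`. -/
noncomputable def expSubsets {ι : Type*} (p : ℝ) (s : Finset ι) (f : Finset ι → ℝ) : ℝ :=
  ∑ A ∈ s.powerset, p ^ A.card * (1 - p) ^ (s.card - A.card) * f A

/-- A set of edges is a matching if no two distinct edges conflict. -/
def isMatching {α : Type*} (conflict : α → α → Prop) (M : Finset α) : Prop :=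
  ∀ e ∈ M, ∀ f ∈ M, e ≠ f → ¬ conflict e f

/-- `OPT`: the maximum total weight of a matching contained in the edge set `E`. -/
noncomputable def optWeight {α : Type*} (w : α → ℝ) (conflict : α → α → Prop)
    (E : Finset α) : ℝ :=
  (E.powerset.filter fun M => isMatching conflict M).sup'
    ⟨∅, Finset.mem_filter.mpr ⟨Finset.empty_mem_powerset _,
        fun e he => absurd he (Finset.notMem_empty e)⟩⟩
    (fun M => ∑ e ∈ M, w e)

/-- One step of the greedy-based online algorithm with sample `L'`: the arriving
vertex `u` gets as candidate the edge incident to `u` in `Greedy(G[L' ∪ {u}])`, and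
the candidate edge is added if its right endpoint is not yet matched. -/
noncomputable def stepB {L R : Type*} [DecidableEq L] [DecidableEq R]
    (E : Finset (L × R)) (w : L × R → ℝ) (L' : Finset L)
    (M : Finset (L × R)) (u : L) : Finset (L × R) :=
  M ∪ (greedy w bconf (subL E (insert u L'))).filter
      (fun e => e.1 = u ∧ ∀ f ∈ M, f.2 ≠ e.2)

/-- The output matching of the greedy-based online algorithm with sample `L'`,
when the online vertices arrive in the order given by `order`. -/
noncomputable def runB {L R : Type*} [DecidableEq L] [DecidableEq R]
    (E : Finset (L × R)) (w : L × R → ℝ) (L' : Finset L) (order : List L) :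
    Finset (L × R) :=
  order.foldl (stepB E w L') ∅

section GreedyLemmas

variable {α : Type*} [DecidableEq α] (w : α → ℝ) (c : α → α → Prop)

lemma greedyAux_succ (n : ℕ) (F : Finset α) (h : F.Nonempty) :
    greedyAux w c (n+1) F = insert (F.exists_max_image w h).choose
      (greedyAux w c n (F.filter fun f => ¬ c (F.exists_max_image w h).choose f)) := by
  rw [greedyAux, dif_pos h]

lemma greedyAux_empty : ∀ n : ℕ, greedyAux w c n (∅ : Finset α) = ∅ := by
  intro n
  cases n with
  | zero => rfl
  | succ n => rw [greedyAux, dif_neg (by simp)]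

lemma greedyAux_subset : ∀ (n : ℕ) (F : Finset α), greedyAux w c n F ⊆ F := by
  intro n
  induction n with
  | zero => intro F x hx; simp [greedyAux] at hx
  | succ n ih =>
    intro F x hx
    by_cases h : F.Nonempty
    · rw [greedyAux_succ w c n F h] at hx
      rcases Finset.mem_insert.mp hx with rfl | hx'
      · exact (F.exists_max_image w h).choose_spec.1
      · exact Finset.filter_subset _ _ (ih _ hx')
    · rw [Finset.not_nonempty_iff_eq_empty] at h
      subst h
      rw [greedyAux_empty] at hx
      exact absurd hx (Finset.notMem_empty x)

lemma greedyAux_fuel (hc : ∀ a, c a a) :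
    ∀ (n m : ℕ) (F : Finset α), F.card ≤ n → F.card ≤ m →
      greedyAux w c n F = greedyAux w c m F := by
  intro n
  induction n with
  | zero =>
    intro m F h1 _
    have hF : F = ∅ := Finset.card_eq_zero.mp (Nat.le_zero.mp h1)
    subst hF
    rw [greedyAux_empty, greedyAux_empty]
  | succ n ih =>
    intro m F h1 h2
    by_cases h : F.Nonempty
    · match m with
      | 0 =>
        have : F = ∅ := Finset.card_eq_zero.mp (Nat.le_zero.mp h2)
        subst this
        exact absurd h (by simp)
      | m + 1 =>
        rw [greedyAux_succ w c n F h, greedyAux_succ w c m F h]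
        congr 1
        set e := (F.exists_max_image w h).choose with he
        have heF : e ∈ F := (F.exists_max_image w h).choose_spec.1
        have hsub : F.filter (fun f => ¬ c e f) ⊆ F.erase e := by
          intro x hx
          rw [Finset.mem_filter] at hx
          rw [Finset.mem_erase]
          refine ⟨?_, hx.1⟩
          rintro rfl
          exact hx.2 (hc _)
        have hcard : (F.filter (fun f => ¬ c e f)).card ≤ F.card - 1 := by
          calc (F.filter (fun f => ¬ c e f)).card ≤ (F.erase e).card :=
                Finset.card_le_card hsub
            _ = F.card - 1 := Finset.card_erase_of_mem heF
        exact ih _ _ (by omega) (by omega)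
    · rw [Finset.not_nonempty_iff_eq_empty] at h
      subst h
      rw [greedyAux_empty, greedyAux_empty]

lemma greedy_empty : greedy w c (∅ : Finset α) = ∅ := rfl

lemma greedy_subset (F : Finset α) : greedy w c F ⊆ F := greedyAux_subset w c _ F

lemma greedy_eq_insert (hc : ∀ a, c a a) {F : Finset α} (h : F.Nonempty) :
    greedy w c F = insert (F.exists_max_image w h).choose
      (greedy w c (F.filter fun f => ¬ c (F.exists_max_image w h).choose f)) := by
  unfold greedy
  obtain ⟨k, hk⟩ : ∃ k, F.card = k + 1 :=
    ⟨F.card - 1, (Nat.succ_pred_eq_of_pos (Finset.card_pos.mpr h)).symm⟩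
  rw [hk, greedyAux_succ w c k F h]
  congr 1
  set e := (F.exists_max_image w h).choose with he
  have heF : e ∈ F := (F.exists_max_image w h).choose_spec.1
  have hsub : F.filter (fun f => ¬ c e f) ⊆ F.erase e := by
    intro x hx
    rw [Finset.mem_filter] at hx
    rw [Finset.mem_erase]
    refine ⟨?_, hx.1⟩
    rintro rfl
    exact hx.2 (hc _)
  have hcard : (F.filter (fun f => ¬ c e f)).card ≤ F.card - 1 := by
    calc (F.filter (fun f => ¬ c e f)).card ≤ (F.erase e).card :=
          Finset.card_le_card hsub
      _ = F.card - 1 := Finset.card_erase_of_mem heF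
  exact greedyAux_fuel w c hc _ _ _ (by omega) le_rfl

lemma greedy_char_aux (hrefl : ∀ a, c a a) (hsym : ∀ a b, c a b → c b a) :
    ∀ (n : ℕ) (F : Finset α), F.card ≤ n → Set.InjOn w ↑F →
      ∀ e, (e ∈ greedy w c F ↔
        e ∈ F ∧ ∀ f ∈ F, w e < w f → c e f → f ∉ greedy w c F) := by
  intro n
  induction n with
  | zero =>
    intro F h1 _ e
    have hF : F = ∅ := Finset.card_eq_zero.mp (Nat.le_zero.mp h1)
    subst hF
    simp [greedy_empty]
  | succ n ih =>
    intro F hcard hinj e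
    by_cases h : F.Nonempty
    swap
    · rw [Finset.not_nonempty_iff_eq_empty] at h
      subst h
      simp [greedy_empty]
    rw [greedy_eq_insert w c hrefl h]
    set e0 := (F.exists_max_image w h).choose with he0def
    obtain ⟨he0F, he0max⟩ := (F.exists_max_image w h).choose_spec
    set F' := F.filter (fun f => ¬ c e0 f) with hF'def
    have hF'sub : F' ⊆ F := Finset.filter_subset _ _
    have hF'card : F'.card ≤ n := by
      have hsub : F' ⊆ F.erase e0 := by
        intro x hx
        rw [hF'def, Finset.mem_filter] at hx
        rw [Finset.mem_erase]
        refine ⟨?_, hx.1⟩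
        rintro rfl
        exact hx.2 (hrefl _)
      have h1 := Finset.card_le_card hsub
      rw [Finset.card_erase_of_mem he0F] at h1
      omega
    have hinj' : Set.InjOn w ↑F' := hinj.mono (by exact_mod_cast hF'sub)
    have IH := ih F' hF'card hinj'
    have hMsub : greedy w c F' ⊆ F' := greedy_subset w c F'
    constructor
    · intro hx
      rcases Finset.mem_insert.mp hx with rfl | hx'
      · refine ⟨he0F, ?_⟩
        intro f hf hlt _
        exact absurd hlt (not_lt.mpr (he0max f hf))
      · have heF' : e ∈ F' := hMsub hx'
        refine ⟨hF'sub heF', ?_⟩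
        intro f hfF hlt hcf hfM
        rcases Finset.mem_insert.mp hfM with rfl | hfM'
        · rw [hF'def, Finset.mem_filter] at heF'
          exact heF'.2 (hsym _ _ hcf)
        · exact ((IH e).mp hx').2 f (hMsub hfM') hlt hcf hfM'
    · rintro ⟨heF, hcond⟩
      by_cases he : e = e0
      · subst he; exact Finset.mem_insert_self _ _
      · have hlt : w e < w e0 := by
          refine lt_of_le_of_ne (he0max e heF) (fun hw => he ?_)
          exact hinj (by exact_mod_cast heF) (by exact_mod_cast he0F) hw
        have hce0 : ¬ c e e0 := fun hcc =>
          hcond e0 he0F hlt hcc (Finset.mem_insert_self _ _)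
        have heF' : e ∈ F' := by
          rw [hF'def, Finset.mem_filter]
          exact ⟨heF, fun hcc => hce0 (hsym _ _ hcc)⟩
        refine Finset.mem_insert_of_mem ((IH e).mpr ⟨heF', ?_⟩)
        intro f hfF' hlt' hcf hfM'
        exact hcond f (hF'sub hfF') hlt' hcf (Finset.mem_insert_of_mem hfM')

lemma greedy_char (hrefl : ∀ a, c a a) (hsym : ∀ a b, c a b → c b a)
    {F : Finset α} (hinj : Set.InjOn w ↑F) (e : α) :
    e ∈ greedy w c F ↔
      e ∈ F ∧ ∀ f ∈ F, w e < w f → c e f → f ∉ greedy w c F :=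
  greedy_char_aux w c hrefl hsym F.card F le_rfl hinj e

lemma greedy_coupling (hrefl : ∀ a, c a a) (P : α → Prop) :
    ∀ (n : ℕ) (F₂ F₁ : Finset α), F₂.card ≤ n → Set.InjOn w ↑F₂ →
      (∀ x, x ∈ F₁ ↔ x ∈ F₂ ∧ ¬ P x) →
      ∀ f, ¬ P f →
        ((f ∈ greedy w c F₁ ∧ f ∉ greedy w c F₂) ∨
         (f ∈ greedy w c F₂ ∧ f ∉ greedy w c F₁)) →
        ∃ g ∈ greedy w c F₂, P g ∧ w f < w g := by
  intro n
  induction n with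
  | zero =>
    intro F₂ F₁ h1 _ hF₁ f _ hd
    have hF : F₂ = ∅ := Finset.card_eq_zero.mp (Nat.le_zero.mp h1)
    subst hF
    have hF1 : F₁ = ∅ := by
      ext x
      simp only [Finset.notMem_empty, iff_false]
      intro hx
      exact absurd ((hF₁ x).mp hx).1 (Finset.notMem_empty x)
    subst hF1
    simp [greedy_empty] at hd
  | succ n ih =>
    intro F₂ F₁ hcard hinj hF₁ f hPf hd
    by_cases h : F₂.Nonempty
    swap
    · rw [Finset.not_nonempty_iff_eq_empty] at h
      subst h
      have hF1 : F₁ = ∅ := by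
        ext x
        simp only [Finset.notMem_empty, iff_false]
        intro hx
        exact absurd ((hF₁ x).mp hx).1 (Finset.notMem_empty x)
      subst hF1
      simp [greedy_empty] at hd
    set m₂ := (F₂.exists_max_image w h).choose with hm₂def
    obtain ⟨hm₂F, hm₂max⟩ := (F₂.exists_max_image w h).choose_spec
    have hF₁sub : F₁ ⊆ F₂ := fun x hx => ((hF₁ x).mp hx).1
    have hM₂ := greedy_eq_insert w c hrefl h
    rw [← hm₂def] at hM₂
    set F₂' := F₂.filter (fun g => ¬ c m₂ g) with hF₂'def
    have hF₂'sub : F₂' ⊆ F₂ := Finset.filter_subset _ _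
    have hF₂'card : F₂'.card ≤ n := by
      have hsub : F₂' ⊆ F₂.erase m₂ := by
        intro x hx
        rw [hF₂'def, Finset.mem_filter] at hx
        rw [Finset.mem_erase]
        refine ⟨?_, hx.1⟩
        rintro rfl
        exact hx.2 (hrefl _)
      have h1 := Finset.card_le_card hsub
      rw [Finset.card_erase_of_mem hm₂F] at h1
      omega
    by_cases hP : P m₂
    · -- the max is a P-edge; everything else is lighter
      have hfF₂ : f ∈ F₂ ∧ f ≠ m₂ := by
        have hne : f ≠ m₂ := fun hEq => hPf (hEq ▸ hP)
        rcases hd with ⟨h1, _⟩ | ⟨h1, _⟩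
        · exact ⟨hF₁sub (greedy_subset w c _ h1), hne⟩
        · rw [hM₂] at h1
          rcases Finset.mem_insert.mp h1 with hEq | h1'
          · exact absurd hEq hne
          · exact ⟨hF₂'sub (greedy_subset w c _ h1'), hne⟩
      refine ⟨m₂, ?_, hP, ?_⟩
      · rw [hM₂]; exact Finset.mem_insert_self _ _
      · refine lt_of_le_of_ne (hm₂max f hfF₂.1) (fun hw => hfF₂.2 ?_)
        exact hinj (by exact_mod_cast hfF₂.1) (by exact_mod_cast hm₂F) hw
    · -- the max is a non-P edge; both greedys pick it, recurse
      have hm₂F₁ : m₂ ∈ F₁ := (hF₁ m₂).mpr ⟨hm₂F, hP⟩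
      have h₁ : F₁.Nonempty := ⟨m₂, hm₂F₁⟩
      set m₁ := (F₁.exists_max_image w h₁).choose with hm₁def
      obtain ⟨hm₁F₁, hm₁max⟩ := (F₁.exists_max_image w h₁).choose_spec
      have hm : m₁ = m₂ := by
        have hle1 : w m₂ ≤ w m₁ := hm₁max m₂ hm₂F₁
        have hle2 : w m₁ ≤ w m₂ := hm₂max m₁ (hF₁sub hm₁F₁)
        exact hinj (by exact_mod_cast hF₁sub hm₁F₁) (by exact_mod_cast hm₂F)
          (le_antisymm hle2 hle1)
      have hM₁ := greedy_eq_insert w c hrefl h₁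
      rw [← hm₁def, hm] at hM₁
      set F₁' := F₁.filter (fun g => ¬ c m₂ g) with hF₁'def
      have hF₁' : ∀ x, x ∈ F₁' ↔ x ∈ F₂' ∧ ¬ P x := by
        intro x
        rw [hF₁'def, hF₂'def, Finset.mem_filter, Finset.mem_filter, hF₁ x]
        tauto
      have hne : f ≠ m₂ := by
        rintro rfl
        rcases hd with ⟨_, h2⟩ | ⟨_, h2⟩
        · rw [hM₂] at h2; exact h2 (Finset.mem_insert_self _ _)
        · rw [hM₁] at h2; exact h2 (Finset.mem_insert_self _ _)
      have hinj' : Set.InjOn w ↑F₂' := hinj.mono (by exact_mod_cast hF₂'sub)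
      have hd' : (f ∈ greedy w c F₁' ∧ f ∉ greedy w c F₂') ∨
          (f ∈ greedy w c F₂' ∧ f ∉ greedy w c F₁') := by
        rcases hd with ⟨h1, h2⟩ | ⟨h1, h2⟩
        · rw [hM₁] at h1
          rcases Finset.mem_insert.mp h1 with hEq | h1'
          · exact absurd hEq hne
          · refine Or.inl ⟨h1', fun hmem => h2 ?_⟩
            rw [hM₂]; exact Finset.mem_insert_of_mem hmem
        · rw [hM₂] at h1
          rcases Finset.mem_insert.mp h1 with hEq | h1'
          · exact absurd hEq hne
          · refine Or.inr ⟨h1', fun hmem => h2 ?_⟩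
            rw [hM₁]; exact Finset.mem_insert_of_mem hmem
      obtain ⟨g, hg1, hg2, hg3⟩ := ih F₂' F₁' hF₂'card hinj' hF₁' f hPf hd'
      refine ⟨g, ?_, hg2, hg3⟩
      rw [hM₂]
      exact Finset.mem_insert_of_mem hg1

end GreedyLemmas







lemma bconf_refl {L R : Type*} (e : L × R) : bconf e e := Or.inl rfl

lemma bconf_symm {L R : Type*} (e f : L × R) : bconf e f → bconf f e := by
  rintro (h | h)
  · exact Or.inl h.symm
  · exact Or.inr h.symm

section Main

variable {L R : Type*} [DecidableEq L] [DecidableEq R]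

lemma active_iff_greedy (E : Finset (L × R)) (w : L × R → ℝ)
    (hwinj : Set.InjOn w ↑E)
    (active : Finset L → L × R → Prop)
    (hact : ∀ A : Finset L, ∀ e ∈ E, (active A e ↔
      (∀ f ∈ E, w e < w f → f.1 = e.1 → ¬ active A f) ∧
      (∀ f ∈ E, w e < w f → (f.1 = e.1 ∨ f.2 = e.2) → ¬ (active A f ∧ f.1 ∈ A)))) :
    ∀ (n : ℕ), ∀ e ∈ E, (E.filter fun f => w e < w f).card ≤ n →
      ∀ A : Finset L, (active A e ↔ e ∈ greedy w bconf (subL E (insert e.1 A))) := by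
  intro n
  induction n using Nat.strong_induction_on with
  | _ n IH =>
    intro e heE hcn A
    have hsubLE : ∀ U : Finset L, subL E U ⊆ E := fun U => Finset.filter_subset _ _
    have hIH : ∀ f ∈ E, w e < w f → ∀ A' : Finset L,
        (active A' f ↔ f ∈ greedy w bconf (subL E (insert f.1 A'))) := by
      intro f hfE hlt A'
      have hflt : (E.filter fun g => w f < w g).card < n := by
        have hsub : (E.filter fun g => w f < w g) ⊆
            (E.filter fun g => w e < w g).erase f := by
          intro g hg
          rw [Finset.mem_filter] at hg
          rw [Finset.mem_erase, Finset.mem_filter]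
          exact ⟨fun hEq => absurd (hEq ▸ hg.2) (lt_irrefl _), hg.1, lt_trans hlt hg.2⟩
        have h1 := Finset.card_le_card hsub
        have h2 : f ∈ E.filter fun g => w e < w g := Finset.mem_filter.mpr ⟨hfE, hlt⟩
        rw [Finset.card_erase_of_mem h2] at h1
        have h3 : 0 < (E.filter fun g => w e < w g).card := Finset.card_pos.mpr ⟨f, h2⟩
        omega
      exact IH _ hflt f hfE le_rfl A'
    have hinj₂ : Set.InjOn w ↑(subL E (insert e.1 A)) :=
      hwinj.mono (by exact_mod_cast hsubLE (insert e.1 A))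
    have heF₂ : e ∈ subL E (insert e.1 A) :=
      Finset.mem_filter.mpr ⟨heE, Finset.mem_insert_self _ _⟩
    have hchar := greedy_char w bconf bconf_refl bconf_symm hinj₂ e
    by_cases huA : e.1 ∈ A
    · -- own vertex already red: insert e.1 A = A
      have hsame : insert e.1 A = A := Finset.insert_eq_self.mpr huA
      rw [hsame] at hchar heF₂ ⊢
      rw [hact A e heE, hchar]
      constructor
      · rintro ⟨hi, hii⟩
        refine ⟨heF₂, ?_⟩
        intro f hfF hlt hcf hfM
        have hfE : f ∈ E := hsubLE _ hfF
        have hf1A : f.1 ∈ A := (Finset.mem_filter.mp hfF).2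
        have hactf : active A f := by
          refine (hIH f hfE hlt A).mpr ?_
          rw [Finset.insert_eq_self.mpr hf1A]
          exact hfM
        exact hii f hfE hlt (Or.imp Eq.symm Eq.symm hcf) ⟨hactf, hf1A⟩
      · rintro ⟨_, hcond⟩
        constructor
        · intro f hfE hlt hf1 hactf
          have hf1A : f.1 ∈ A := hf1 ▸ huA
          have hfM : f ∈ greedy w bconf (subL E A) := by
            have := (hIH f hfE hlt A).mp hactf
            rwa [Finset.insert_eq_self.mpr hf1A] at this
          exact hcond f (Finset.mem_filter.mpr ⟨hfE, hf1A⟩) hlt (Or.inl hf1.symm) hfM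
        · rintro f hfE hlt hor ⟨hactf, hf1A⟩
          have hfM : f ∈ greedy w bconf (subL E A) := by
            have := (hIH f hfE hlt A).mp hactf
            rwa [Finset.insert_eq_self.mpr hf1A] at this
          exact hcond f (Finset.mem_filter.mpr ⟨hfE, hf1A⟩) hlt
            (Or.imp Eq.symm Eq.symm hor) hfM
    · -- own vertex blue: use the coupling lemma
      have hkey : ∀ x : L × R, x ∈ subL E A ↔
          x ∈ subL E (insert e.1 A) ∧ ¬ (x.1 = e.1) := by
        intro x
        simp only [subL, Finset.mem_filter, Finset.mem_insert]
        constructor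
        · rintro ⟨hgE, hg1⟩
          exact ⟨⟨hgE, Or.inr hg1⟩, fun hEq => huA (hEq ▸ hg1)⟩
        · rintro ⟨⟨hgE, hg1⟩, hgne⟩
          exact ⟨hgE, hg1.resolve_left hgne⟩
      have hS : ∀ f : L × R, f.1 ≠ e.1 →
          ((f ∈ greedy w bconf (subL E A) ∧
              f ∉ greedy w bconf (subL E (insert e.1 A))) ∨
           (f ∈ greedy w bconf (subL E (insert e.1 A)) ∧
              f ∉ greedy w bconf (subL E A))) →
          ∃ g ∈ greedy w bconf (subL E (insert e.1 A)), g.1 = e.1 ∧ w f < w g := by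
        intro f hf hd
        exact greedy_coupling w bconf bconf_refl (fun g => g.1 = e.1)
          (subL E (insert e.1 A)).card (subL E (insert e.1 A)) (subL E A) le_rfl hinj₂
          hkey f hf hd
      rw [hact A e heE, hchar]
      constructor
      · rintro ⟨hi, hii⟩
        refine ⟨heF₂, ?_⟩
        intro f hfF hlt hcf hfM
        have hfE : f ∈ E := hsubLE _ hfF
        have hf1B : f.1 ∈ insert e.1 A := (Finset.mem_filter.mp hfF).2
        rcases Finset.mem_insert.mp hf1B with hf1u | hf1A
        · have hactf : active A f := by
            refine (hIH f hfE hlt A).mpr ?_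
            rw [hf1u]
            exact hfM
          exact hi f hfE hlt hf1u hactf
        · by_cases hfM₁ : f ∈ greedy w bconf (subL E A)
          · have hactf : active A f := by
              refine (hIH f hfE hlt A).mpr ?_
              rw [Finset.insert_eq_self.mpr hf1A]
              exact hfM₁
            exact hii f hfE hlt (Or.imp Eq.symm Eq.symm hcf) ⟨hactf, hf1A⟩
          · have hfne : f.1 ≠ e.1 := fun hEq => huA (hEq ▸ hf1A)
            obtain ⟨g, hgM, hg1, hgw⟩ := hS f hfne (Or.inr ⟨hfM, hfM₁⟩)
            have hgE : g ∈ E := hsubLE _ (greedy_subset w bconf _ hgM)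
            have hglt : w e < w g := lt_trans hlt hgw
            have hactg : active A g := by
              refine (hIH g hgE hglt A).mpr ?_
              rw [hg1]
              exact hgM
            exact hi g hgE hglt hg1 hactg
      · rintro ⟨_, hcond⟩
        constructor
        · intro f hfE hlt hf1 hactf
          have hfM : f ∈ greedy w bconf (subL E (insert e.1 A)) := by
            have := (hIH f hfE hlt A).mp hactf
            rwa [hf1] at this
          have hfF : f ∈ subL E (insert e.1 A) :=
            Finset.mem_filter.mpr ⟨hfE, by rw [hf1]; exact Finset.mem_insert_self _ _⟩
          exact hcond f hfF hlt (Or.inl hf1.symm) hfM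
        · rintro f hfE hlt hor ⟨hactf, hf1A⟩
          have hfM₁ : f ∈ greedy w bconf (subL E A) := by
            have := (hIH f hfE hlt A).mp hactf
            rwa [Finset.insert_eq_self.mpr hf1A] at this
          have hfne : f.1 ≠ e.1 := fun hEq => huA (hEq ▸ hf1A)
          by_cases hfM₂ : f ∈ greedy w bconf (subL E (insert e.1 A))
          · have hfF : f ∈ subL E (insert e.1 A) :=
              Finset.mem_filter.mpr ⟨hfE, Finset.mem_insert_of_mem hf1A⟩
            exact hcond f hfF hlt (Or.imp Eq.symm Eq.symm hor) hfM₂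
          · obtain ⟨g, hgM, hg1, hgw⟩ := hS f hfne (Or.inl ⟨hfM₁, hfM₂⟩)
            have hgF : g ∈ subL E (insert e.1 A) := greedy_subset w bconf _ hgM
            have hglt : w e < w g := lt_trans hlt hgw
            exact hcond g hgF hglt (Or.inl hg1.symm) hgM

end Main

lemma exp_ind {ι : Type*} [DecidableEq ι] (p : ℝ) (x : ι) (s : Finset ι) (hx : x ∉ s)
    (g : Finset ι → ℝ) (hg : ∀ A, g (insert x A) = g A) :
    expSubsets p (insert x s) (fun A => (if x ∈ A then (1:ℝ) else 0) * g A)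
      = p * expSubsets p (insert x s) g := by
  unfold expSubsets
  rw [Finset.sum_powerset_insert hx, Finset.sum_powerset_insert hx, mul_add]
  have hcard : (insert x s).card = s.card + 1 := Finset.card_insert_of_notMem hx
  have h1 : ∑ A ∈ s.powerset, p ^ A.card * (1-p) ^ ((insert x s).card - A.card) *
      ((if x ∈ A then (1:ℝ) else 0) * g A) = 0 := by
    refine Finset.sum_eq_zero fun A hA => ?_
    have hxA : x ∉ A := fun hmem => hx (Finset.mem_powerset.mp hA hmem)
    rw [if_neg hxA]
    ring
  rw [h1, zero_add, Finset.mul_sum, Finset.mul_sum, ← Finset.sum_add_distrib]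
  refine Finset.sum_congr rfl fun A hA => ?_
  have hAs : A ⊆ s := Finset.mem_powerset.mp hA
  have hxA : x ∉ A := fun hmem => hx (hAs hmem)
  have hcardA : (insert x A).card = A.card + 1 := Finset.card_insert_of_notMem hxA
  have hk : A.card ≤ s.card := Finset.card_le_card hAs
  simp only []
  rw [if_pos (Finset.mem_insert_self x A), hg A, hcard, hcardA]
  have e1 : s.card + 1 - (A.card + 1) = s.card - A.card := by omega
  have e2 : s.card + 1 - A.card = (s.card - A.card) + 1 := by omega
  rw [e1, e2, pow_succ, pow_succ]
  ring


/-- When each left vertex is colored red independently with probability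
`p` (the red set being the sample `L'`), the expected weight of the greedy matching on
`G[L' ∪ R]` equals `p · Σ_e w(e) · Pr[v_e is active]`, where for each coloring `A` the
predicate `active A` is the inductive activity notion on the directed line graph. -/
theorem stmt1 {L R : Type*} [Fintype L] [DecidableEq L] [DecidableEq R]
    (E : Finset (L × R)) (w : L × R → ℝ)
    (hw0 : ∀ e ∈ E, 0 ≤ w e) (hwinj : Set.InjOn w ↑E)
    (p : ℝ) (hp : p ∈ Set.Icc (0 : ℝ) 1)
    (active : Finset L → L × R → Prop)
    (hact : ∀ A : Finset L, ∀ e ∈ E, (active A e ↔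
      (∀ f ∈ E, w e < w f → f.1 = e.1 → ¬ active A f) ∧
      (∀ f ∈ E, w e < w f → (f.1 = e.1 ∨ f.2 = e.2) → ¬ (active A f ∧ f.1 ∈ A)))) :
    expSubsets p Finset.univ (fun A => ∑ e ∈ greedy w bconf (subL E A), w e)
      = p * ∑ e ∈ E, w e *
          expSubsets p Finset.univ (fun A => if active A e then (1 : ℝ) else 0) := by
  have hB' : ∀ e ∈ E, ∀ A : Finset L,
      (active A e ↔ e ∈ greedy w bconf (subL E (insert e.1 A))) :=
    fun e he A => active_iff_greedy E w hwinj active hact _ e he le_rfl A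
  have hPartB : ∀ e ∈ E, ∀ A : Finset L,
      (e ∈ greedy w bconf (subL E A) ↔ e.1 ∈ A ∧ active A e) := by
    intro e he A
    constructor
    · intro h
      have he1 : e.1 ∈ A := (Finset.mem_filter.mp (greedy_subset w bconf _ h)).2
      refine ⟨he1, ?_⟩
      rw [hB' e he A, Finset.insert_eq_self.mpr he1]
      exact h
    · rintro ⟨he1, hac⟩
      have := (hB' e he A).mp hac
      rwa [Finset.insert_eq_self.mpr he1] at this
  have hstep1 : ∀ A : Finset L, ∑ e ∈ greedy w bconf (subL E A), w e
      = ∑ e ∈ E, w e * ((if e.1 ∈ A then (1:ℝ) else 0) *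
          (if active A e then (1:ℝ) else 0)) := by
    intro A
    have hsub : greedy w bconf (subL E A) ⊆ E :=
      (greedy_subset w bconf _).trans (Finset.filter_subset _ _)
    have h2 : ∀ e ∈ E, w e * ((if e.1 ∈ A then (1:ℝ) else 0) *
        (if active A e then (1:ℝ) else 0))
        = if e ∈ greedy w bconf (subL E A) then w e else 0 := by
      intro e he
      by_cases h1 : e.1 ∈ A <;> by_cases hh2 : active A e <;>
        simp [h1, hh2, hPartB e he A]
    rw [Finset.sum_congr rfl h2, Finset.sum_ite_mem, Finset.inter_eq_right.mpr hsub]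
  calc expSubsets p Finset.univ (fun A => ∑ e ∈ greedy w bconf (subL E A), w e)
      = ∑ e ∈ E, w e * expSubsets p Finset.univ
          (fun A => (if e.1 ∈ A then (1:ℝ) else 0) *
            (if active A e then (1:ℝ) else 0)) := by
        unfold expSubsets
        simp_rw [hstep1, Finset.mul_sum]
        rw [Finset.sum_comm]
        refine Finset.sum_congr rfl fun e he => ?_
        refine Finset.sum_congr rfl fun A hA => ?_
        ring
    _ = ∑ e ∈ E, w e * (p * expSubsets p Finset.univ
          (fun A => if active A e then (1:ℝ) else 0)) := by
        refine Finset.sum_congr rfl fun e he => ?_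
        congr 1
        have hgind : ∀ A : Finset L, (if active (insert e.1 A) e then (1:ℝ) else 0)
            = (if active A e then (1:ℝ) else 0) := by
          intro A
          have h1 := hB' e he A
          have h2 := hB' e he (insert e.1 A)
          rw [Finset.insert_idem] at h2
          by_cases hA : active A e
          · rw [if_pos hA, if_pos (h2.mpr (h1.mp hA))]
          · rw [if_neg hA, if_neg (fun hc => hA (h1.mpr (h2.mp hc)))]
        have hins : (Finset.univ : Finset L) = insert e.1 (Finset.univ.erase e.1) :=
          (Finset.insert_erase (Finset.mem_univ e.1)).symm
        rw [hins]
        exact exp_ind p e.1 _ (Finset.notMem_erase _ _) _ hgind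
    _ = p * ∑ e ∈ E, w e * expSubsets p Finset.univ
          (fun A => if active A e then (1:ℝ) else 0) := by
        rw [Finset.mul_sum]
        refine Finset.sum_congr rfl fun e he => ?_
        ring
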